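/- Let q be an even power of an odd prime with √q ≡ 3 (mod 4), and let w ∈ F_q be a nonsquare. Let O be the set of points of PG(2,q) of the form (a² + c²w : ab + cdw : b² + d²w), where a,b,c,d range over the subfield F_{√q} of F_q with ad − bc ≠ 0. Then every point of O is internal to the conic C : X₂² − X₁X₃ = 0, and no two points of O (equal or distinct) are conjugate; in particular O is an independent set of internal points in the Erdős–Rényi graph ER_q. -/

import Mathlib

open Projectivization

/-- Two points of `PG(2,q)` are conjugate with respect to the orthogonal polarity of the
conic `X₂² - X₁X₃ = 0` if the bilinear form `p₃q₁ - 2p₂q₂ + p₁q₃` vanishes (this is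
independent of the chosen representatives). -/
def ConjOdd {F : Type} [Field F] (P Q : Projectivization F (Fin 3 → F)) : Prop :=
  P.rep 2 * Q.rep 0 - 2 * P.rep 1 * Q.rep 1 + P.rep 0 * Q.rep 2 = 0

/-- The Erdős–Rényi polarity graph `ER_q`. -/
def ER (F : Type) [Field F] : SimpleGraph (Projectivization F (Fin 3 → F)) where
  Adj P Q := P ≠ Q ∧ ConjOdd P Q
  symm := ⟨by
    rintro P Q ⟨h1, h2⟩
    exact ⟨h1.symm, by unfold ConjOdd at *; linear_combination h2⟩⟩
  loopless := ⟨fun P h => h.1 rfl⟩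

/-- A point `P` of `PG(2,q)` is internal to the conic `C : X₂² - X₁X₃ = 0` if
`p₂² - p₁p₃` is a nonsquare of `F_q` (this is independent of representatives). -/
def IsInternal {F : Type} [Field F] (P : Projectivization F (Fin 3 → F)) : Prop :=
  ¬ IsSquare (P.rep 1 ^ 2 - P.rep 0 * P.rep 2)

/-- The orbit `O` of internal points: points of the form
`(a² + c²w : ab + cdw : b² + d²w)` with `a, b, c, d` in the subfield `F_{√q}`
(characterized by `x^{√q} = x`) and `ad - bc ≠ 0`. -/
def Oset (F : Type) [Field F] (s : ℕ) (w : F) : Set (Projectivization F (Fin 3 → F)) :=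
  {P | ∃ a b c d : F, a ^ s = a ∧ b ^ s = b ∧ c ^ s = c ∧ d ^ s = d ∧
    a * d - b * c ≠ 0 ∧
    ∃ hx : (![a ^ 2 + c ^ 2 * w, a * b + c * d * w, b ^ 2 + d ^ 2 * w] : Fin 3 → F) ≠ 0,
      P = Projectivization.mk F _ hx}

/-- Let `q = s²` be an even power of an odd prime with `s = √q ≡ 3 (mod 4)` and let
`w ∈ F_q` be a nonsquare. Then every point of `O` is internal to `C : X₂² - X₁X₃ = 0`,
no two points of `O` (equal or distinct) are conjugate, and in particular `O` is an
independent set of internal points in `ER_q`. -/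
theorem Oset_internal_non_conjugate
    (p k s : ℕ) (hp : p.Prime) (hpodd : Odd p) (hk : 0 < k) (hs : s = p ^ k)
    (hmod : s % 4 = 3)
    (F : Type) [Field F] [Fintype F] (hF : Fintype.card F = s ^ 2)
    (w : F) (hw : ¬ IsSquare w) :
    (∀ P ∈ Oset F s w, IsInternal P) ∧
    (∀ P ∈ Oset F s w, ∀ Q ∈ Oset F s w,
      P.rep 2 * Q.rep 0 - 2 * P.rep 1 * Q.rep 1 + P.rep 0 * Q.rep 2 ≠ 0) ∧
    (∀ P ∈ Oset F s w, ∀ Q ∈ Oset F s w, ¬ (ER F).Adj P Q) := by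
  have hs3 : 3 ≤ s := by omega
  set m := (s - 1) / 2 with hmdef
  have hm : s = 2 * m + 1 := by omega
  have hmodd : m % 2 = 1 := by omega
  -- the characteristic of F is p
  have hcharP : CharP F (ringChar F) := ringChar.charP F
  have hcp : (ringChar F).Prime := CharP.char_is_prime F (ringChar F)
  obtain ⟨n, hn1, hn2⟩ := FiniteField.card F (ringChar F)
  have hpr : ringChar F = p := by
    have h1 : (ringChar F) ^ (n : ℕ) = p ^ (k * 2) := by
      rw [← hn2, hF, hs, ← pow_mul]
    have h2 : ringChar F ∣ p ^ (k * 2) := by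
      rw [← h1]
      exact dvd_pow_self _ (by exact_mod_cast n.ne_zero)
    exact (Nat.prime_dvd_prime_iff_eq hcp hp).mp (hcp.dvd_of_dvd_pow h2)
  haveI : CharP F p := hpr ▸ hcharP
  haveI := Fact.mk hp
  have hp2 : p ≠ 2 := by
    rintro rfl
    rw [Nat.odd_iff] at hpodd
    omega
  have h2ne : (2 : F) ≠ 0 := by
    intro h
    have : p ∣ 2 := (CharP.cast_eq_zero_iff F p 2).mp (by exact_mod_cast h)
    have := (Nat.prime_dvd_prime_iff_eq hp Nat.prime_two).mp this
    exact hp2 this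
  have hchar2 : ringChar F ≠ 2 := by rw [hpr]; exact hp2
  have hadd : ∀ x y : F, (x + y) ^ s = x ^ s + y ^ s := by
    intro x y; rw [hs]; exact add_pow_char_pow x y p k
  have hsodd : Odd s := Nat.odd_iff.mpr (by omega)
  have hneg : ∀ x : F, (-x) ^ s = -(x ^ s) := fun x => hsodd.neg_pow x
  have hsub : ∀ x y : F, x ^ s = x → y ^ s = y → (x - y) ^ s = x - y := by
    intro x y hx hy
    rw [sub_eq_add_neg, hadd, hneg, hx, hy, ← sub_eq_add_neg]
  have hKmul : ∀ x y : F, x ^ s = x → y ^ s = y → (x * y) ^ s = x * y := by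
    intro x y hx hy; rw [mul_pow, hx, hy]
  have hKsq2 : ∀ x : F, x ^ s = x → (x ^ 2) ^ s = x ^ 2 := by
    intro x hx; rw [pow_right_comm, hx]
  have hw0 : w ≠ 0 := fun h => hw (by rw [h]; exact ⟨0, by ring⟩)
  have hcard2 : Fintype.card F / 2 = (s + 1) * m := by
    rw [hF]
    have h : s ^ 2 = 2 * ((s + 1) * m) + 1 := by rw [hm]; ring
    omega
  have hKpow : ∀ x : F, x ^ s = x → x ≠ 0 → x ^ (s - 1) = 1 := by
    intro x hx hx0
    have h := pow_succ x (s - 1)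
    rw [show s - 1 + 1 = s by omega, hx] at h
    apply mul_right_cancel₀ hx0
    rw [one_mul, ← h]
  have hKsqF : ∀ x : F, x ^ s = x → x ≠ 0 → IsSquare x := by
    intro x hx hx0
    rw [FiniteField.isSquare_iff hchar2 hx0, hcard2,
      show (s + 1) * m = (s - 1) * (m + 1) by
        have h1 : s - 1 = 2 * m := by omega
        rw [h1, hm]; ring,
      pow_mul, hKpow x hx hx0, one_pow]
  have hK1 : ∀ y : F, y ^ s = y → y * y = -1 → False := by
    intro y hy hy2
    have hy0 : y ≠ 0 := by
      rintro rfl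
      simp at hy2
    have h1 : y ^ s = -y := by
      rw [hm, pow_succ, pow_mul]
      have hsq : y ^ 2 = -1 := by rw [sq]; exact hy2
      rw [hsq, (Nat.odd_iff.mpr hmodd).neg_one_pow, neg_one_mul]
    rw [hy] at h1
    have h2 : (2 : F) * y = 0 := by linear_combination h1
    rcases mul_eq_zero.mp h2 with h | h
    · exact h2ne h
    · exact hy0 h
  -- the core algebraic lemma
  have core : ∀ x y z t : F, x ^ s = x → y ^ s = y → z ^ s = z → t ^ s = t →
      x ^ 2 + (y ^ 2 + z ^ 2) * w + t ^ 2 * w ^ 2 = 0 →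
      x = 0 ∧ y = 0 ∧ z = 0 ∧ t = 0 := by
    intro x y z t hx hy hz ht hE
    have hwK : w ^ s ≠ w := fun h => hw (hKsqF w h hw0)
    have hxs2 : (x ^ 2) ^ s = x ^ 2 := hKsq2 x hx
    have hB : ((y ^ 2 + z ^ 2) : F) ^ s = y ^ 2 + z ^ 2 := by
      rw [hadd, hKsq2 y hy, hKsq2 z hz]
    have ht2 : (t ^ 2) ^ s = t ^ 2 := hKsq2 t ht
    by_cases htz : t = 0
    · subst htz
      by_cases hBz : y ^ 2 + z ^ 2 = 0
      · have hx2 : x ^ 2 = 0 := by linear_combination hE - w * hBz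
        have hx0 : x = 0 := by
          exact pow_eq_zero_iff (two_ne_zero) |>.mp hx2
        have hz0 : z = 0 := by
          by_contra hz0
          exact hK1 (y / z) (by rw [div_pow, hy, hz])
            (by field_simp; linear_combination hBz)
        have hy0 : y = 0 := by
          have h : y ^ 2 = 0 := by rw [hz0] at hBz; linear_combination hBz
          exact pow_eq_zero_iff (two_ne_zero) |>.mp h
        exact ⟨hx0, hy0, hz0, rfl⟩
      · exfalso
        have h1 : w * (y ^ 2 + z ^ 2) = -(x ^ 2) := by linear_combination hE
        have h3 : (w * (y ^ 2 + z ^ 2)) ^ s = (-(x ^ 2)) ^ s := congrArg (· ^ s) h1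
        rw [mul_pow, hB, hneg, hxs2] at h3
        exact hwK (mul_right_cancel₀ hBz (h3.trans h1.symm))
    · exfalso
      have hE2 : t ^ 2 * (w ^ s) ^ 2 + (y ^ 2 + z ^ 2) * (w ^ s) + x ^ 2 = 0 := by
        have h0 : t ^ 2 * w ^ 2 + ((y ^ 2 + z ^ 2) * w + x ^ 2) = 0 := by
          linear_combination hE
        have h3 : (t ^ 2 * w ^ 2 + ((y ^ 2 + z ^ 2) * w + x ^ 2)) ^ s = (0 : F) ^ s :=
          congrArg (· ^ s) h0
        rw [hadd, hadd, mul_pow, mul_pow, zero_pow (by omega : s ≠ 0),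
          ht2, hB, hxs2, pow_right_comm w 2 s] at h3
        linear_combination h3
      have hne : w ≠ w ^ s := fun h => hwK h.symm
      have hfac : (w - w ^ s) * (t ^ 2 * (w + w ^ s) + (y ^ 2 + z ^ 2)) = 0 := by
        linear_combination hE - hE2
      have hsum : t ^ 2 * (w + w ^ s) + (y ^ 2 + z ^ 2) = 0 :=
        (mul_eq_zero.mp hfac).resolve_left (sub_ne_zero_of_ne hne)
      have hprod : t ^ 2 * (w * w ^ s) = x ^ 2 := by
        linear_combination w * hsum - hE
      by_cases hxz : x = 0
      · subst hxz
        have hz2 : w * w ^ s = 0 := by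
          have ht2z : (t : F) ^ 2 ≠ 0 := pow_ne_zero 2 htz
          have : t ^ 2 * (w * w ^ s) = 0 := by linear_combination hprod
          exact (mul_eq_zero.mp this).resolve_left ht2z
        rcases mul_eq_zero.mp hz2 with h | h
        · exact hw0 h
        · exact hw0 (pow_eq_zero_iff (by omega : s ≠ 0) |>.mp h)
      · apply hw
        have hxt : (x / t) ^ s = x / t := by rw [div_pow, hx, ht]
        have hxt0 : x / t ≠ 0 := div_ne_zero hxz htz
        rw [FiniteField.isSquare_iff hchar2 hw0, hcard2]
        have e1 : w ^ (s + 1) = (x / t) ^ 2 := by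
          rw [pow_succ]
          field_simp
          linear_combination hprod
        calc w ^ ((s + 1) * m) = ((x / t) ^ 2) ^ m := by rw [pow_mul, e1]
          _ = (x / t) ^ (s - 1) := by rw [← pow_mul]; congr 1; omega
          _ = 1 := hKpow _ hxt hxt0
  -- representatives of points of O
  have getRep : ∀ P ∈ Oset F s w, ∃ a b c d : F, ∃ u : Fˣ,
      a ^ s = a ∧ b ^ s = b ∧ c ^ s = c ∧ d ^ s = d ∧ a * d - b * c ≠ 0 ∧
      P.rep 0 = (u : F) * (a ^ 2 + c ^ 2 * w) ∧
      P.rep 1 = (u : F) * (a * b + c * d * w) ∧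
      P.rep 2 = (u : F) * (b ^ 2 + d ^ 2 * w) := by
    rintro P ⟨a, b, c, d, ha, hb, hc, hd, hD, hx, rfl⟩
    obtain ⟨u, hu⟩ := Projectivization.exists_smul_eq_mk_rep F _ hx
    refine ⟨a, b, c, d, u, ha, hb, hc, hd, hD, ?_, ?_, ?_⟩ <;>
      rw [← hu] <;> simp [Units.smul_def] <;> ring
  -- internal points
  have internal : ∀ P ∈ Oset F s w, IsInternal P := by
    intro P hP
    obtain ⟨a, b, c, d, u, ha, hb, hc, hd, hD, h0, h1, h2⟩ := getRep P hP
    intro hsq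
    obtain ⟨r, hr⟩ := hsq
    obtain ⟨i, hi⟩ := (FiniteField.isSquare_neg_one_iff (F := F)).mpr
      (by rw [hF, Nat.pow_mod, hmod]; norm_num)
    rw [h0, h1, h2] at hr
    apply hw
    have hu0 : (u : F) ≠ 0 := u.ne_zero
    have hne : (u : F) * (a * d - b * c) ≠ 0 := mul_ne_zero hu0 hD
    refine ⟨i * r / ((u : F) * (a * d - b * c)), ?_⟩
    field_simp
    linear_combination (-1 : F) * hr + r * r * hi
  have conj : ∀ P ∈ Oset F s w, ∀ Q ∈ Oset F s w,
      P.rep 2 * Q.rep 0 - 2 * P.rep 1 * Q.rep 1 + P.rep 0 * Q.rep 2 ≠ 0 := by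
    intro P hP Q hQ h
    obtain ⟨a, b, c, d, u, ha, hb, hc, hd, hD, h0, h1, h2⟩ := getRep P hP
    obtain ⟨a', b', c', d', t, ha', hb', hc', hd', hD', g0, g1, g2⟩ := getRep Q hQ
    rw [h0, h1, h2, g0, g1, g2] at h
    have hut : (u : F) * (t : F) ≠ 0 := mul_ne_zero u.ne_zero t.ne_zero
    have hE : (a * b' - a' * b) ^ 2 +
        ((a * d' - b * c') ^ 2 + (a' * d - b' * c) ^ 2) * w +
        (c * d' - c' * d) ^ 2 * w ^ 2 = 0 := by
      apply mul_left_cancel₀ hut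
      rw [mul_zero]
      linear_combination h
    obtain ⟨hX, hY, hZ, hT⟩ := core _ _ _ _
      (hsub _ _ (hKmul _ _ ha hb') (hKmul _ _ ha' hb))
      (hsub _ _ (hKmul _ _ ha hd') (hKmul _ _ hb hc'))
      (hsub _ _ (hKmul _ _ ha' hd) (hKmul _ _ hb' hc))
      (hsub _ _ (hKmul _ _ hc hd') (hKmul _ _ hc' hd)) hE
    have : (a * d - b * c) * (a' * d' - b' * c') = 0 := by
      linear_combination (a' * d - b' * c) * hY + (a * b' - a' * b) * hT
    exact mul_ne_zero hD hD' this
  refine ⟨internal, conj, ?_⟩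
  intro P hP Q hQ hadj
  obtain ⟨-, h2⟩ := hadj
  exact conj P hP Q hQ h2
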